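/- Let T be a conservative ergodic measure-preserving transformation of an infinite σ-finite measure space (X, μ), and suppose the Poisson product T × T* is ergodic. Then any T-equivariant measurable map Φ : X → L¹(μ), satisfying Φ_{Tx} ∘ T = Φ_x for a.e. x, is zero: Φ_x = 0 in L¹(μ) for μ-a.e. x. -/

import Mathlib

open MeasureTheory Set

noncomputable section

variable {X : Type*} [MeasurableSpace X]

/-- The event that a realization `ω` (a subset of `X`) has exactly `n` points in `B`. -/
def countEvent (B : Set X) (n : ℕ) : Set (Set X) := {ω : Set X | (ω ∩ B).encard = (n : ℕ∞)}

/-- The σ-algebra `𝓑*` on the space of realizations (countable subsets of `X`),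
generated by the count events `[|ω ∩ B| = n]` for measurable `B` and `n ∈ ℕ`. -/
instance (priority := 2000) starSigma (X : Type*) [MeasurableSpace X] :
    MeasurableSpace (Set X) :=
  MeasurableSpace.generateFrom
    {s : Set (Set X) | ∃ (B : Set X) (n : ℕ), MeasurableSet B ∧ s = countEvent B n}

/-- `P` is the law of a Poisson point process on `X` with intensity `μ`:
a probability measure on `(X*, 𝓑*)` such that the number of points in a finite-measure
measurable set `B` is Poisson distributed with mean `μ(B)`, and the counts in pairwise
disjoint sets are jointly independent. -/
structure IsPoissonPP (μ : Measure X) (P : Measure (Set X)) : Prop where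
  prob : P Set.univ = 1
  marginal : ∀ B : Set X, MeasurableSet B → μ B ≠ ⊤ → ∀ k : ℕ,
    P (countEvent B k) =
      ENNReal.ofReal (Real.exp (-(μ B).toReal) * (μ B).toReal ^ k / (Nat.factorial k))
  indep : ∀ (n : ℕ) (A : Fin n → Set X) (k : Fin n → ℕ),
    (∀ i, MeasurableSet (A i)) → (∀ i, μ (A i) ≠ ⊤) →
    Pairwise (fun i j => Disjoint (A i) (A j)) →
    P (⋂ i, countEvent (A i) (k i)) = ∏ i, P (countEvent (A i) (k i))

end

noncomputable section
namespace PoissonAux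
open Filter ENNReal Topology

variable {X : Type*} [MeasurableSpace X]

lemma measurableSet_countEvent {B : Set X} (hB : MeasurableSet B) (n : ℕ) :
    MeasurableSet (countEvent B n) :=
  MeasurableSpace.measurableSet_generateFrom ⟨B, n, hB, rfl⟩

lemma countEvent_zero (B : Set X) : countEvent B 0 = {ω : Set X | ω ∩ B = ∅} := by
  ext ω
  simp [countEvent, Set.encard_eq_zero]

lemma measurableSet_empty_inter {C : Set X} (hC : MeasurableSet C) :
    MeasurableSet {ω : Set X | ω ∩ C = ∅} := by
  rw [← countEvent_zero]; exact measurableSet_countEvent hC 0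

/-- Probability that the process avoids a finite measure set. -/
lemma P_empty_inter {μ : Measure X} {P : Measure (Set X)} (hP : IsPoissonPP μ P)
    {C : Set X} (hC : MeasurableSet C) (hfin : μ C ≠ ⊤) :
    P {ω : Set X | ω ∩ C = ∅} = ENNReal.ofReal (Real.exp (-(μ C).toReal)) := by
  rw [← countEvent_zero, hP.marginal C hC hfin 0]
  norm_num

/-- The process almost surely avoids a null set. -/
lemma P_null_inter {μ : Measure X} {P : Measure (Set X)} [IsProbabilityMeasure P]
    (hP : IsPoissonPP μ P) {N : Set X} (hN : MeasurableSet N) (h0 : μ N = 0) :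
    P {ω : Set X | (ω ∩ N).Nonempty} = 0 := by
  have h1 : P {ω : Set X | ω ∩ N = ∅} = 1 := by
    rw [P_empty_inter hP hN (by simp [h0])]
    simp [h0]
  have : {ω : Set X | (ω ∩ N).Nonempty} = {ω : Set X | ω ∩ N = ∅}ᶜ := by
    ext ω; simp [Set.nonempty_iff_ne_empty]
  rw [this, measure_compl (measurableSet_empty_inter hN) (measure_ne_top _ _), h1,
    measure_univ, tsub_self]

/-- The process almost surely has finitely many points in a finite measure set. -/
lemma P_finite_inter {μ : Measure X} {P : Measure (Set X)} [IsProbabilityMeasure P]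
    (hP : IsPoissonPP μ P) {C : Set X} (hC : MeasurableSet C) (hfin : μ C ≠ ⊤) :
    P {ω : Set X | (ω ∩ C).Infinite} = 0 := by
  set lam := (μ C).toReal with hlam
  have hfinset : {ω : Set X | (ω ∩ C).Finite} = ⋃ k : ℕ, countEvent C k := by
    ext ω
    simp only [Set.mem_setOf_eq, Set.mem_iUnion, countEvent]
    constructor
    · intro h
      have := h.encard_eq_coe_toFinset_card
      exact ⟨h.toFinset.card, by simp [this]⟩
    · rintro ⟨k, hk⟩
      rw [← Set.encard_ne_top_iff]
      simp [hk]
  have hdisj : Pairwise (Function.onFun Disjoint fun k : ℕ => countEvent C k) := by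
    intro i j hij
    simp only [Function.onFun, Set.disjoint_left]
    intro ω hi hj
    exact hij (by exact_mod_cast (hi.symm.trans hj : (i : ℕ∞) = j))
  have hsum : P {ω : Set X | (ω ∩ C).Finite} = ∑' k : ℕ, P (countEvent C k) := by
    rw [hfinset, measure_iUnion hdisj fun k => measurableSet_countEvent hC k]
  have hval : ∀ k : ℕ, P (countEvent C k)
      = ENNReal.ofReal (Real.exp (-lam) * lam ^ k / (Nat.factorial k)) := fun k =>
    hP.marginal C hC hfin k
  have hsummable : Summable fun k : ℕ => Real.exp (-lam) * lam ^ k / (Nat.factorial k) := by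
    have := (Real.summable_pow_div_factorial lam).mul_left (Real.exp (-lam))
    convert this using 2 with k
    exacts [rfl, by ring]
  have hone : P {ω : Set X | (ω ∩ C).Finite} = 1 := by
    rw [hsum]
    have : ∑' k : ℕ, P (countEvent C k)
        = ENNReal.ofReal (∑' k : ℕ, Real.exp (-lam) * lam ^ k / (Nat.factorial k)) := by
      rw [ENNReal.ofReal_tsum_of_nonneg (fun k => by positivity) hsummable]
      exact tsum_congr hval
    rw [this]
    have hexp : ∑' k : ℕ, Real.exp (-lam) * lam ^ k / (Nat.factorial k)
        = Real.exp (-lam) * ∑' k : ℕ, lam ^ k / (Nat.factorial k) := by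
      rw [← tsum_mul_left]
      exact tsum_congr fun k => by ring
    have hexp2 : ∑' k : ℕ, lam ^ k / (Nat.factorial k : ℝ) = Real.exp lam := by
      rw [Real.exp_eq_exp_ℝ, NormedSpace.exp_eq_tsum_div]
    rw [hexp, hexp2, ← Real.exp_add]
    norm_num
  have : {ω : Set X | (ω ∩ C).Infinite} = {ω : Set X | (ω ∩ C).Finite}ᶜ := by
    ext ω; simp
  rw [this, measure_compl _ (measure_ne_top _ _), hone, measure_univ, tsub_self]
  rw [hfinset]
  exact MeasurableSet.iUnion fun k => measurableSet_countEvent hC k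


set_option linter.unusedSectionVars false

variable {X : Type*} [MeasurableSpace X]

/-- A countable union of measurable rectangles. -/
def IsRectUnion (F : Set (X × X)) : Prop :=
  ∃ A C : ℕ → Set X, (∀ i, MeasurableSet (A i)) ∧ (∀ i, MeasurableSet (C i)) ∧
    F = ⋃ i, A i ×ˢ C i

lemma IsRectUnion.measurableSet {F : Set (X × X)} (h : IsRectUnion F) : MeasurableSet F := by
  obtain ⟨A, C, hA, hC, rfl⟩ := h
  exact MeasurableSet.iUnion fun i => (hA i).prod (hC i)

lemma isRectUnion_rect {A C : Set X} (hA : MeasurableSet A) (hC : MeasurableSet C) :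
    IsRectUnion (A ×ˢ C) :=
  ⟨fun _ => A, fun _ => C, fun _ => hA, fun _ => hC, (Set.iUnion_const _).symm⟩

lemma isRectUnion_empty : IsRectUnion (∅ : Set (X × X)) := by
  simpa using isRectUnion_rect (X := X) MeasurableSet.empty MeasurableSet.empty

lemma isRectUnion_iUnion {F : ℕ → Set (X × X)} (h : ∀ n, IsRectUnion (F n)) :
    IsRectUnion (⋃ n, F n) := by
  choose A C hA hC hF using h
  have e : ℕ ≃ ℕ × ℕ := (Denumerable.eqv (ℕ × ℕ)).symm
  refine ⟨fun i => A (e i).1 (e i).2, fun i => C (e i).1 (e i).2,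
    fun i => hA _ _, fun i => hC _ _, ?_⟩
  ext p
  simp only [Set.mem_iUnion]
  constructor
  · rintro ⟨n, hp⟩
    rw [hF n] at hp
    obtain ⟨i, hi⟩ := Set.mem_iUnion.1 hp
    exact ⟨e.symm (n, i), by simpa using hi⟩
  · rintro ⟨i, hi⟩
    exact ⟨(e i).1, by rw [hF (e i).1]; exact Set.mem_iUnion.2 ⟨(e i).2, hi⟩⟩

lemma IsRectUnion.inter {F G : Set (X × X)} (hF : IsRectUnion F) (hG : IsRectUnion G) :
    IsRectUnion (F ∩ G) := by
  obtain ⟨A, C, hA, hC, rfl⟩ := hF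
  obtain ⟨A', C', hA', hC', rfl⟩ := hG
  have : (⋃ i, A i ×ˢ C i) ∩ (⋃ i, A' i ×ˢ C' i)
      = ⋃ i : ℕ × ℕ, (A i.1 ∩ A' i.2) ×ˢ (C i.1 ∩ C' i.2) := by
    ext p
    simp only [Set.mem_inter_iff, Set.mem_iUnion, Set.mem_prod]
    constructor
    · rintro ⟨⟨i, h1, h2⟩, ⟨j, h3, h4⟩⟩
      exact ⟨(i, j), ⟨h1, h3⟩, ⟨h2, h4⟩⟩
    · rintro ⟨⟨i, j⟩, ⟨h1, h3⟩, ⟨h2, h4⟩⟩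
      exact ⟨⟨i, h1, h2⟩, ⟨j, h3, h4⟩⟩
  rw [this]
  have e : ℕ ≃ ℕ × ℕ := (Denumerable.eqv (ℕ × ℕ)).symm
  refine ⟨fun i => A (e i).1 ∩ A' (e i).2, fun i => C (e i).1 ∩ C' (e i).2,
    fun i => (hA _).inter (hA' _), fun i => (hC _).inter (hC' _), ?_⟩
  ext p
  simp only [Set.mem_iUnion]
  exact ⟨fun ⟨i, hi⟩ => ⟨e.symm i, by simpa using hi⟩, fun ⟨i, hi⟩ => ⟨e i, hi⟩⟩

lemma IsRectUnion.preimage_prodMap {F : Set (X × X)} (h : IsRectUnion F) {T : X → X}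
    (hT : Measurable T) : IsRectUnion (Prod.map T T ⁻¹' F) := by
  obtain ⟨A, C, hA, hC, rfl⟩ := h
  refine ⟨fun i => T ⁻¹' A i, fun i => T ⁻¹' C i, fun i => hT (hA i), fun i => hT (hC i), ?_⟩
  ext p
  simp [Prod.map]

/-- Finite intersections (over `Finset.range`) of countable unions of rectangles. -/
lemma isRectUnion_biInter_range {F : ℕ → Set (X × X)} (h : ∀ n, IsRectUnion (F n)) (N : ℕ) :
    IsRectUnion (⋂ n ∈ Finset.range (N + 1), F n) := by
  induction N with
  | zero => simpa using h 0
  | succ N ih =>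
      have : (⋂ n ∈ Finset.range (N + 2), F n)
          = (⋂ n ∈ Finset.range (N + 1), F n) ∩ F (N + 1) := by
        ext p
        simp only [Set.mem_iInter, Set.mem_inter_iff, Finset.mem_range]
        constructor
        · intro hp
          exact ⟨fun n hn => hp n (by omega), hp (N + 1) (by omega)⟩
        · rintro ⟨h1, h2⟩ n hn
          rcases Nat.lt_succ_iff_lt_or_eq.1 hn with hn | rfl
          · exact h1 n hn
          · exact h2
      rw [this]
      exact ih.inter (h (N + 1))


lemma IsRectUnion.union {F G : Set (X × X)} (hF : IsRectUnion F) (hG : IsRectUnion G) :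
    IsRectUnion (F ∪ G) := by
  have h : ∀ n : ℕ, IsRectUnion (if n = 0 then F else G) := by
    intro n; split <;> assumption
  have := isRectUnion_iUnion h
  have he : (⋃ n : ℕ, if n = 0 then F else G) = F ∪ G := by
    ext p
    simp only [Set.mem_iUnion, Set.mem_union]
    constructor
    · rintro ⟨n, hn⟩
      by_cases h0 : n = 0
      · left; simpa [h0] using hn
      · right; simpa [h0] using hn
    · rintro (h | h)
      · exact ⟨0, by simpa using h⟩
      · exact ⟨1, by simpa using h⟩
  rwa [he] at this

section Approx

variable (μ : Measure X) [SigmaFinite μ]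

/-- The spanning rectangle. -/
def Rj (j : ℕ) : Set (X × X) := spanningSets μ j ×ˢ spanningSets μ j

lemma Rj_isRectUnion (j : ℕ) : IsRectUnion (Rj μ j) :=
  isRectUnion_rect (measurableSet_spanningSets μ j) (measurableSet_spanningSets μ j)

lemma Rj_measurableSet (j : ℕ) : MeasurableSet (Rj μ j) :=
  (measurableSet_spanningSets μ j).prod (measurableSet_spanningSets μ j)

lemma Rj_finite (j : ℕ) : μ.prod μ (Rj μ j) ≠ ⊤ := by
  rw [Rj, Measure.prod_prod]
  exact ENNReal.mul_ne_top (measure_spanningSets_lt_top μ j).ne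
    (measure_spanningSets_lt_top μ j).ne

lemma Rj_iUnion : ⋃ j, Rj μ j = (univ : Set (X × X)) := by
  ext p
  simp only [Set.mem_iUnion, Set.mem_univ, iff_true, Rj, Set.mem_prod]
  obtain ⟨j1, h1⟩ : ∃ j, p.1 ∈ spanningSets μ j := by
    have := iUnion_spanningSets μ
    rw [Set.eq_univ_iff_forall] at this
    exact Set.mem_iUnion.1 (this p.1)
  obtain ⟨j2, h2⟩ : ∃ j, p.2 ∈ spanningSets μ j := by
    have := iUnion_spanningSets μ
    rw [Set.eq_univ_iff_forall] at this
    exact Set.mem_iUnion.1 (this p.2)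
  exact ⟨max j1 j2, monotone_spanningSets μ (le_max_left _ _) h1,
    monotone_spanningSets μ (le_max_right _ _) h2⟩

/-- `D` can be approximated from outside by countable unions of rectangles within each
spanning rectangle. -/
def Approx (D : Set (X × X)) : Prop :=
  ∀ j : ℕ, ∀ ε : ℝ≥0∞, ε ≠ 0 →
    ∃ F, IsRectUnion F ∧ D ∩ Rj μ j ⊆ F ∧ F ⊆ Rj μ j ∧ μ.prod μ (F \ (D ∩ Rj μ j)) ≤ ε

def Good (D : Set (X × X)) : Prop := MeasurableSet D ∧ Approx μ D ∧ Approx μ Dᶜ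

variable {μ}

lemma approx_empty : Approx μ (∅ : Set (X × X)) := by
  intro j ε hε
  exact ⟨∅, isRectUnion_empty, by simp, by simp, by simp⟩

lemma approx_univ : Approx μ (univ : Set (X × X)) := by
  intro j ε hε
  refine ⟨Rj μ j, Rj_isRectUnion μ j, by simp, le_refl _, by simp⟩

lemma approx_iUnion {D : ℕ → Set (X × X)} (h : ∀ n, Approx μ (D n)) :
    Approx μ (⋃ n, D n) := by
  intro j ε hε
  obtain ⟨δ, δpos, hδ⟩ := ENNReal.exists_pos_sum_of_countable' hε ℕ
  choose F hF h1 h2 h3 using fun n => h n j (δ n) (δpos n).ne'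
  refine ⟨⋃ n, F n, isRectUnion_iUnion hF, ?_, Set.iUnion_subset h2, ?_⟩
  · rw [Set.iUnion_inter]
    exact Set.iUnion_mono h1
  · calc μ.prod μ ((⋃ n, F n) \ ((⋃ n, D n) ∩ Rj μ j))
        ≤ μ.prod μ (⋃ n, F n \ ((⋃ n, D n) ∩ Rj μ j)) := by
          rw [Set.iUnion_diff]
      _ ≤ ∑' n, μ.prod μ (F n \ ((⋃ n, D n) ∩ Rj μ j)) := measure_iUnion_le _
      _ ≤ ∑' n, μ.prod μ (F n \ (D n ∩ Rj μ j)) := by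
          refine ENNReal.tsum_le_tsum fun n => measure_mono (Set.diff_subset_diff_right ?_)
          exact Set.inter_subset_inter_left _ (Set.subset_iUnion D n)
      _ ≤ ∑' n, δ n := ENNReal.tsum_le_tsum h3
      _ ≤ ε := hδ.le

lemma approx_iInter {D : ℕ → Set (X × X)} (hmeas : ∀ n, MeasurableSet (D n))
    (h : ∀ n, Approx μ (D n)) : Approx μ (⋂ n, D n) := by
  intro j ε hε
  have hε2 : (ε / 2) ≠ 0 := (ENNReal.half_pos hε).ne'
  obtain ⟨δ, δpos, hδ⟩ := ENNReal.exists_pos_sum_of_countable' hε2 ℕ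
  choose F hF h1 h2 h3 using fun n => h n j (δ n) (δpos n).ne'
  -- the decreasing approximants and targets
  set A : ℕ → Set (X × X) := fun N => ⋂ n ∈ Finset.range (N + 1), (D n ∩ Rj μ j) with hA
  have hAmeas : ∀ N, MeasurableSet (A N) := fun N =>
    MeasurableSet.biInter (Finset.range (N + 1)).countable_toSet
      (fun n _ => (hmeas n).inter (Rj_measurableSet μ j))
  have hAanti : Antitone A := by
    intro m n hmn p hp
    rw [Set.mem_iInter₂] at hp ⊢
    intro i hi
    refine hp i ?_
    simp only [Finset.mem_range] at *
    omega
  have hAinter : (⋂ N, A N) = (⋂ n, D n) ∩ Rj μ j := by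
    ext p
    simp only [hA, Set.mem_iInter, Set.mem_inter_iff, Finset.mem_range]
    constructor
    · intro hp
      exact ⟨fun n => (hp n n (by omega)).1, (hp 0 0 (by omega)).2⟩
    · rintro ⟨hp, hr⟩ N n _
      exact ⟨hp n, hr⟩
  -- continuity from above
  have htend : Tendsto (fun N => μ.prod μ (A N \ ((⋂ n, D n) ∩ Rj μ j))) atTop (𝓝 0) := by
    have h0 : (⋂ N, A N \ ((⋂ n, D n) ∩ Rj μ j)) = ∅ := by
      rw [Set.eq_empty_iff_forall_notMem]
      intro p hp
      rw [Set.mem_iInter] at hp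
      exact (hp 0).2 (hAinter ▸ Set.mem_iInter.2 fun N => (hp N).1)
    have := tendsto_measure_iInter_atTop (μ := μ.prod μ)
      (s := fun N => A N \ ((⋂ n, D n) ∩ Rj μ j))
      (fun N => ((hAmeas N).diff ((MeasurableSet.iInter hmeas).inter
        (Rj_measurableSet μ j))).nullMeasurableSet)
      (fun m n hmn => Set.diff_subset_diff_left (hAanti hmn))
      ⟨0, by
        refine ne_top_of_le_ne_top (Rj_finite μ j) (measure_mono ?_)
        refine Set.diff_subset.trans ?_
        simp only [hA]
        exact Set.biInter_subset_of_mem (by simp : 0 ∈ Finset.range 1) |>.trans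
          Set.inter_subset_right⟩
    rw [h0] at this
    simpa [Function.comp_def] using this
  obtain ⟨N, hN⟩ := (htend.eventually_le_const (ENNReal.half_pos hε)).exists
  -- the candidate
  refine ⟨⋂ n ∈ Finset.range (N + 1), F n, isRectUnion_biInter_range hF N, ?_, ?_, ?_⟩
  · intro p hp
    rw [Set.mem_iInter₂]
    intro n _
    exact h1 n ⟨Set.mem_iInter.1 hp.1 n, hp.2⟩
  · intro p hp
    rw [Set.mem_iInter₂] at hp
    exact h2 0 (hp 0 (by simp))
  · have hsub : (⋂ n ∈ Finset.range (N + 1), F n) \ ((⋂ n, D n) ∩ Rj μ j)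
        ⊆ (⋃ n ∈ Finset.range (N + 1), (F n \ (D n ∩ Rj μ j)))
          ∪ (A N \ ((⋂ n, D n) ∩ Rj μ j)) := by
      rintro p ⟨hp1, hp2⟩
      by_cases hpA : p ∈ A N
      · exact Or.inr ⟨hpA, hp2⟩
      · left
        rw [hA, Set.mem_iInter₂, not_forall] at hpA
        obtain ⟨n, hn⟩ := hpA
        rw [not_forall] at hn
        obtain ⟨hn, hpn⟩ := hn
        exact Set.mem_biUnion hn ⟨Set.mem_iInter₂.1 hp1 n hn, hpn⟩
    calc μ.prod μ ((⋂ n ∈ Finset.range (N + 1), F n) \ ((⋂ n, D n) ∩ Rj μ j))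
        ≤ μ.prod μ ((⋃ n ∈ Finset.range (N + 1), (F n \ (D n ∩ Rj μ j)))
          ∪ (A N \ ((⋂ n, D n) ∩ Rj μ j))) := measure_mono hsub
      _ ≤ μ.prod μ (⋃ n ∈ Finset.range (N + 1), (F n \ (D n ∩ Rj μ j)))
          + μ.prod μ (A N \ ((⋂ n, D n) ∩ Rj μ j)) := measure_union_le _ _
      _ ≤ (∑ n ∈ Finset.range (N + 1), μ.prod μ (F n \ (D n ∩ Rj μ j))) + ε / 2 := by
          gcongr
          exact measure_biUnion_finset_le _ _
      _ ≤ (∑ n ∈ Finset.range (N + 1), δ n) + ε / 2 := by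
          gcongr with n hn
          exact h3 n
      _ ≤ (∑' n, δ n) + ε / 2 := by
          gcongr
          exact ENNReal.sum_le_tsum _
      _ ≤ ε / 2 + ε / 2 := by gcongr
      _ = ε := ENNReal.add_halves ε

lemma good_compl {D : Set (X × X)} (h : Good μ D) : Good μ Dᶜ :=
  ⟨h.1.compl, h.2.2, by rw [compl_compl]; exact h.2.1⟩

lemma good_iUnion {D : ℕ → Set (X × X)} (h : ∀ n, Good μ (D n)) : Good μ (⋃ n, D n) := by
  refine ⟨MeasurableSet.iUnion fun n => (h n).1, approx_iUnion fun n => (h n).2.1, ?_⟩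
  rw [Set.compl_iUnion]
  exact approx_iInter (fun n => (h n).1.compl) (fun n => (h n).2.2)

lemma good_rect {A C : Set X} (hA : MeasurableSet A) (hC : MeasurableSet C) :
    Good μ (A ×ˢ C) := by
  refine ⟨hA.prod hC, ?_, ?_⟩
  · intro j ε hε
    refine ⟨(A ×ˢ C) ∩ Rj μ j, ?_, le_refl _, Set.inter_subset_right, by simp⟩
    exact (isRectUnion_rect hA hC).inter (Rj_isRectUnion μ j)
  · intro j ε hε
    have hcompl : (A ×ˢ C)ᶜ = (Aᶜ ×ˢ (univ : Set X)) ∪ ((univ : Set X) ×ˢ Cᶜ) := by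
      ext p
      simp only [Set.mem_compl_iff, Set.mem_union, Set.mem_prod, Set.mem_univ, and_true, true_and, not_and_or]
    refine ⟨(A ×ˢ C)ᶜ ∩ Rj μ j, ?_, le_refl _, Set.inter_subset_right, by simp⟩
    rw [hcompl, Set.union_inter_distrib_right]
    exact ((isRectUnion_rect hA.compl MeasurableSet.univ).inter (Rj_isRectUnion μ j)).union
      (((isRectUnion_rect MeasurableSet.univ hC.compl).inter (Rj_isRectUnion μ j)))

lemma good_of_measurableSet {D : Set (X × X)} (hD : MeasurableSet D) : Good μ D := by
  let m' : MeasurableSpace (X × X) :=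
    { MeasurableSet' := Good μ
      measurableSet_empty := by
        refine ⟨MeasurableSet.empty, approx_empty, ?_⟩
        rw [Set.compl_empty]
        exact approx_univ
      measurableSet_compl := fun s hs => good_compl hs
      measurableSet_iUnion := fun f hf => good_iUnion hf }
  have hle : (Prod.instMeasurableSpace : MeasurableSpace (X × X)) ≤ m' := by
    rw [← generateFrom_prod]
    apply MeasurableSpace.generateFrom_le
    rintro s ⟨A, hA, C, hC, rfl⟩
    exact good_rect hA hC
  exact hle _ hD

/-- Outer approximation of a measurable set in the product by a countable union of
measurable rectangles. -/
lemma exists_rectUnion_superset {D : Set (X × X)} (hD : MeasurableSet D)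
    {ε : ℝ≥0∞} (hε : ε ≠ 0) :
    ∃ F, IsRectUnion F ∧ D ⊆ F ∧ μ.prod μ (F \ D) ≤ ε := by
  obtain ⟨δ, δpos, hδ⟩ := ENNReal.exists_pos_sum_of_countable' hε ℕ
  have hgood := good_of_measurableSet (μ := μ) hD
  choose F hF h1 h2 h3 using fun j => hgood.2.1 j (δ j) (δpos j).ne'
  refine ⟨⋃ j, F j, isRectUnion_iUnion hF, ?_, ?_⟩
  · intro p hp
    have : p ∈ ⋃ j, Rj μ j := by rw [Rj_iUnion]; trivial
    obtain ⟨j, hj⟩ := Set.mem_iUnion.1 this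
    exact Set.mem_iUnion.2 ⟨j, h1 j ⟨hp, hj⟩⟩
  · calc μ.prod μ ((⋃ j, F j) \ D) ≤ ∑' j, μ.prod μ (F j \ D) := by
          rw [Set.iUnion_diff]; exact measure_iUnion_le _
      _ ≤ ∑' j, μ.prod μ (F j \ (D ∩ Rj μ j)) := by
          refine ENNReal.tsum_le_tsum fun j => measure_mono ?_
          exact Set.diff_subset_diff_right Set.inter_subset_left
      _ ≤ ∑' j, δ j := ENNReal.tsum_le_tsum h3
      _ ≤ ε := hδ.le

end Approx

lemma exists_empty_of_antitone_finite {s : ℕ → Set X} (hmono : Antitone s)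
    (hfin : (s 0).Finite) (h : ⋂ k, s k = ∅) : ∃ k, s k = ∅ := by
  have hfins : ∀ k, (s k).Finite := fun k => hfin.subset (hmono (Nat.zero_le k))
  have hne : {m : ℕ | ∃ k, (s k).ncard = m}.Nonempty := ⟨(s 0).ncard, 0, rfl⟩
  obtain ⟨k₀, hk₀⟩ : ∃ k₀, (s k₀).ncard = sInf {m : ℕ | ∃ k, (s k).ncard = m} :=
    Nat.sInf_mem hne
  have hmin : ∀ k, (s k₀).ncard ≤ (s k).ncard := fun k =>
    hk₀ ▸ Nat.sInf_le ⟨k, rfl⟩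
  have heq : ∀ k, k₀ ≤ k → s k = s k₀ := by
    intro k hk
    exact Set.eq_of_subset_of_ncard_le (hmono hk) (hmin k) (hfins k₀)
  refine ⟨k₀, ?_⟩
  rw [← h]
  apply Set.Subset.antisymm
  · intro p hp
    rw [Set.mem_iInter]
    intro k
    rcases le_total k k₀ with hk | hk
    · exact hmono hk hp
    · rw [heq k hk]; exact hp
  · intro p hp
    exact Set.mem_iInter.1 hp k₀


/-- On a.e. realization, the union of the avoidance events of a decreasing sequence of
finite measure sets agrees with the avoidance event of the intersection. -/
lemma ae_union_empty_iff {μ : Measure X} {P : Measure (Set X)} [IsProbabilityMeasure P]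
    (hP : IsPoissonPP μ P)
    {C : ℕ → Set X} (hC : ∀ k, MeasurableSet (C k)) (hmono : Antitone C)
    (hfin : μ (C 0) ≠ ⊤) :
    (⋃ k, {ω : Set X | ω ∩ C k = ∅}) =ᵐ[P] {ω : Set X | ω ∩ (⋂ k, C k) = ∅} := by
  have hae : ∀ᵐ ω ∂P, ¬(ω ∩ C 0).Infinite := by
    have h0 := P_finite_inter (μ := μ) (P := P) hP (hC 0) hfin
    rw [← compl_compl {ω : Set X | (ω ∩ C 0).Infinite}] at h0
    exact (MeasureTheory.ae_iff).2 (by simpa using h0)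
  rw [Filter.eventuallyEq_set]
  filter_upwards [hae] with ω hω
  simp only [Set.mem_iUnion, Set.mem_setOf_eq]
  constructor
  · rintro ⟨k, hk⟩
    have : ω ∩ (⋂ k, C k) ⊆ ω ∩ C k :=
      Set.inter_subset_inter_right _ (Set.iInter_subset _ k)
    rw [hk] at this
    exact Set.subset_empty_iff.1 this
  · intro h
    refine exists_empty_of_antitone_finite (s := fun k => ω ∩ C k) ?_ ?_ ?_
    · intro m n hmn
      exact Set.inter_subset_inter_right _ (hmono hmn)
    · rwa [Set.not_infinite] at hω
    · rw [← h, ← Set.inter_iInter]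



section SF
variable {X : Type*} [MeasurableSpace X]

lemma measurableSet_nonempty_inter {C : Set X} (hC : MeasurableSet C) :
    MeasurableSet {ω : Set X | (ω ∩ C).Nonempty} := by
  have : {ω : Set X | (ω ∩ C).Nonempty} = {ω : Set X | ω ∩ C = ∅}ᶜ := by
    ext ω; simp [Set.nonempty_iff_ne_empty]
  rw [this]
  exact (measurableSet_empty_inter hC).compl

/-- The event that the realization avoids the fiber of `F` over the first coordinate. -/
def SF (F : Set (X × X)) : Set (X × Set X) := {q | q.2 ∩ (Prod.mk q.1 ⁻¹' F) = ∅}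

lemma SF_slice (F : Set (X × X)) (x : X) :
    Prod.mk x ⁻¹' SF F = {ω : Set X | ω ∩ (Prod.mk x ⁻¹' F) = ∅} := rfl

lemma measurableSet_SF {F : Set (X × X)} (h : IsRectUnion F) : MeasurableSet (SF F) := by
  obtain ⟨A, C, hA, hC, rfl⟩ := h
  have key : SF (⋃ i, A i ×ˢ C i) = (⋃ i, A i ×ˢ {ω : Set X | (ω ∩ C i).Nonempty})ᶜ := by
    ext ⟨x, ω⟩
    simp only [SF, Set.mem_setOf_eq, Set.mem_compl_iff, Set.mem_iUnion, Set.mem_prod,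
      Set.eq_empty_iff_forall_notMem, Set.mem_inter_iff, Set.mem_preimage, not_exists]
    constructor
    · intro h i hi
      obtain ⟨hxi, y, hy⟩ := hi
      exact h y ⟨hy.1, i, hxi, hy.2⟩
    · intro h y hy
      obtain ⟨hy1, i, hxi, hyi⟩ := hy
      exact h i ⟨hxi, y, hy1, hyi⟩
  rw [key]
  exact (MeasurableSet.iUnion fun i => (hA i).prod (measurableSet_nonempty_inter (hC i))).compl

lemma SF_preimage {F : Set (X × X)} (T : X → X) :
    Prod.map T (Set.image T) ⁻¹' SF F = SF (Prod.map T T ⁻¹' F) := by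
  ext ⟨x, ω⟩
  simp only [SF, Set.mem_preimage, Set.mem_setOf_eq, Prod.map_apply]
  rw [Set.eq_empty_iff_forall_notMem, Set.eq_empty_iff_forall_notMem]
  constructor
  · intro h y ⟨hy1, hy2⟩
    exact h (T y) ⟨Set.mem_image_of_mem T hy1, hy2⟩
  · rintro h z ⟨hz1, hz2⟩
    obtain ⟨y, hy, rfl⟩ := hz1
    exact h y ⟨hy, hz2⟩

end SF

end PoissonAux
end

open PoissonAux ENNReal Topology Filter in
noncomputable section
/-- Let `T` be a conservative ergodic measure-preserving transformation of an
infinite σ-finite measure space and suppose the Poisson product `T × T*` is ergodic (where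
`T* = Set.image T` is the Poisson suspension, acting on the Poisson measure `P = μ*`).
Then any `T`-equivariant measurable map `Φ : X → L¹(μ)` (i.e. `Φ_{Tx}(Ty) = Φ_x(y)` a.e.)
is zero: `Φ_x = 0` in `L¹(μ)` for μ-a.e. `x`. -/
theorem poisson_paper_stmt12 {X : Type*} [MeasurableSpace X] (μ : Measure X)
    [SigmaFinite μ] [NullSingletonClass μ] (hinf : μ Set.univ = ⊤)
    (T : X → X) (hT : MeasurePreserving T μ μ) (hc : Conservative T μ) (herg : Ergodic T μ)
    (P : Measure (Set X)) [IsProbabilityMeasure P] (hP : IsPoissonPP μ P)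
    (hprod : Ergodic (Prod.map T (Set.image T)) (μ.prod P))
    (Φ : X → X → ℝ) (hmeas : Measurable (Function.uncurry Φ))
    (hint : ∀ x, Integrable (Φ x) μ)
    (hequiv : ∀ᵐ p ∂(μ.prod μ), Φ (T p.1) (T p.2) = Φ p.1 p.2) :
    ∀ᵐ x ∂μ, Φ x =ᵐ[μ] 0 := by
  classical
  have key : ∀ t : ℝ, 0 < t → ∀ᵐ x ∂μ, μ {y : X | t < |Φ x y|} = 0 := by
    intro t ht
    set ν : Measure (X × X) := μ.prod μ with hν
    set D : Set (X × X) := {p : X × X | t < |Φ p.1 p.2|} with hDdef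
    have hDmeas : MeasurableSet D := measurableSet_lt measurable_const hmeas.abs
    have hDslice : ∀ x : X, Prod.mk x ⁻¹' D = {y : X | t < |Φ x y|} := fun x => rfl
    have hDxfin : ∀ x, μ (Prod.mk x ⁻¹' D) ≠ ⊤ := by
      intro x
      refine ne_top_of_le_ne_top ((hint x).measure_norm_ge_lt_top ht).ne (measure_mono ?_)
      intro y hy
      rw [hDslice] at hy
      exact le_of_lt (by simpa [Real.norm_eq_abs] using hy)
    have hTT : MeasurePreserving (Prod.map T T) ν ν := hT.prod hT
    set D' : Set (X × X) := Prod.map T T ⁻¹' D with hD'def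
    have hD'meas : MeasurableSet D' := hTT.measurable hDmeas
    have hnull : ν {p : X × X | ¬ Φ (T p.1) (T p.2) = Φ p.1 p.2} = 0 := ae_iff.1 hequiv
    have hDD'1 : ν (D' \ D) = 0 := by
      refine measure_mono_null ?_ hnull
      rintro ⟨a, b⟩ ⟨h1, h2⟩
      simp only [hD'def, hDdef, Set.mem_preimage, Set.mem_setOf_eq, Prod.map_apply] at h1 h2 ⊢
      intro heq
      exact h2 (by rw [← heq]; exact h1)
    have hDD'2 : ν (D \ D') = 0 := by
      refine measure_mono_null ?_ hnull
      rintro ⟨a, b⟩ ⟨h1, h2⟩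
      simp only [hD'def, hDdef, Set.mem_preimage, Set.mem_setOf_eq, Prod.map_apply] at h1 h2 ⊢
      intro heq
      exact h2 (by rw [heq]; exact h1)
    -- outer approximation by decreasing countable unions of rectangles
    have h2k : ∀ k : ℕ, ((2 : ℝ≥0∞)⁻¹ ^ k) ≠ 0 :=
      fun k => pow_ne_zero k (ENNReal.inv_ne_zero.2 (by norm_num))
    choose F0 hF0ru hF0sub hF0diff using
      fun k : ℕ => exists_rectUnion_superset (μ := μ) hDmeas (h2k k)
    set Fk : ℕ → Set (X × X) := fun k => ⋂ n ∈ Finset.range (k + 1), F0 n with hFkdef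
    have hFkru : ∀ k, IsRectUnion (Fk k) := fun k => isRectUnion_biInter_range hF0ru k
    have hFkmeas : ∀ k, MeasurableSet (Fk k) := fun k => (hFkru k).measurableSet
    have hFkD : ∀ k, D ⊆ Fk k := fun k => Set.subset_iInter₂ fun n _ => hF0sub n
    have hFkanti : Antitone Fk := by
      intro m n hmn p hp
      rw [Set.mem_iInter₂] at hp ⊢
      intro i hi
      refine hp i ?_
      simp only [Finset.mem_range] at *
      omega
    have hFkdiff : ∀ k, ν (Fk k \ D) ≤ (2 : ℝ≥0∞)⁻¹ ^ k := by
      intro k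
      refine le_trans (measure_mono (Set.diff_subset_diff_left ?_)) (hF0diff k)
      exact Set.biInter_subset_of_mem (Finset.self_mem_range_succ k)
    set G : Set (X × X) := ⋂ k, Fk k with hGdef
    have hGmeas : MeasurableSet G := MeasurableSet.iInter hFkmeas
    have hDG : D ⊆ G := Set.subset_iInter hFkD
    have hGdiff : ν (G \ D) = 0 := by
      have hle : ∀ k, ν (G \ D) ≤ (2 : ℝ≥0∞)⁻¹ ^ k := fun k =>
        le_trans (measure_mono (Set.diff_subset_diff_left (Set.iInter_subset _ k))) (hFkdiff k)
      have htend : Filter.Tendsto (fun k : ℕ => (2 : ℝ≥0∞)⁻¹ ^ k) Filter.atTop (nhds 0) :=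
        ENNReal.tendsto_pow_atTop_nhds_zero_of_lt_one (by norm_num)
      exact le_antisymm (ge_of_tendsto htend (Filter.Eventually.of_forall hle)) zero_le'
    -- transported versions
    set Fk' : ℕ → Set (X × X) := fun k => Prod.map T T ⁻¹' Fk k with hFk'def
    have hFk'ru : ∀ k, IsRectUnion (Fk' k) := fun k => (hFkru k).preimage_prodMap hT.measurable
    have hFk'meas : ∀ k, MeasurableSet (Fk' k) := fun k => (hFk'ru k).measurableSet
    have hFk'D : ∀ k, D' ⊆ Fk' k := fun k => Set.preimage_mono (hFkD k)
    have hFk'anti : Antitone Fk' := fun m n hmn => Set.preimage_mono (hFkanti hmn)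
    set G' : Set (X × X) := Prod.map T T ⁻¹' G with hG'def
    have hG'meas : MeasurableSet G' := hTT.measurable hGmeas
    have hG'iInter : G' = ⋂ k, Fk' k := by
      rw [hG'def, hGdef, Set.preimage_iInter]
    have hD'G' : D' ⊆ G' := Set.preimage_mono hDG
    have hG'diff : ν (G' \ D') = 0 := by
      have hset : G' \ D' = Prod.map T T ⁻¹' (G \ D) := by
        rw [Set.preimage_diff]
      rw [hset, hTT.measure_preimage (hGmeas.diff hDmeas).nullMeasurableSet]
      exact hGdiff
    have hFk'0diff : ν (Fk' 0 \ D') ≠ ⊤ := by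
      have hset : Fk' 0 \ D' = Prod.map T T ⁻¹' (Fk 0 \ D) := by
        rw [Set.preimage_diff]
      rw [hset, hTT.measure_preimage ((hFkmeas 0).diff hDmeas).nullMeasurableSet]
      exact ne_top_of_le_ne_top (by simp : ((2 : ℝ≥0∞)⁻¹ ^ 0) ≠ ⊤) (hFkdiff 0)
    -- the almost invariant set
    set S : Set (X × Set X) := ⋃ k, SF (Fk k) with hSdef
    have hSmeas : MeasurableSet S := MeasurableSet.iUnion fun k => measurableSet_SF (hFkru k)
    set S2 : Set (X × Set X) := Prod.map T (Set.image T) ⁻¹' S with hS2def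
    have hS2eq : S2 = ⋃ k, SF (Fk' k) := by
      rw [hS2def, hSdef, Set.preimage_iUnion]
      exact Set.iUnion_congr fun k => SF_preimage T
    have hprodmeas : Measurable (Prod.map T (Set.image T)) := hprod.toMeasurePreserving.measurable
    have hS2meas : MeasurableSet S2 := hSmeas.preimage hprodmeas
    -- almost every x is good
    have slice_fin : ∀ {s : Set (X × X)}, MeasurableSet s → ν s ≠ ⊤ →
        ∀ᵐ x ∂μ, μ (Prod.mk x ⁻¹' s) ≠ ⊤ := by
      intro s hs hfin
      have happ : ν s = ∫⁻ x, μ (Prod.mk x ⁻¹' s) ∂μ := Measure.prod_apply hs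
      have hlt : ∫⁻ x, μ (Prod.mk x ⁻¹' s) ∂μ ≠ ⊤ := by rw [← happ]; exact hfin
      filter_upwards [ae_lt_top (measurable_measure_prodMk_left hs) hlt] with x hx
      exact hx.ne
    have slice_null : ∀ {s : Set (X × X)}, MeasurableSet s → ν s = 0 →
        ∀ᵐ x ∂μ, μ (Prod.mk x ⁻¹' s) = 0 := by
      intro s hs h0
      exact (Measure.measure_prod_null hs).1 h0
    have e1 : ∀ᵐ x ∂μ, μ (Prod.mk x ⁻¹' (Fk 0 \ D)) ≠ ⊤ :=
      slice_fin ((hFkmeas 0).diff hDmeas)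
        (ne_top_of_le_ne_top (by simp : ((2 : ℝ≥0∞)⁻¹ ^ 0) ≠ ⊤) (hFkdiff 0))
    have e2 : ∀ᵐ x ∂μ, μ (Prod.mk x ⁻¹' (G \ D)) = 0 := slice_null (hGmeas.diff hDmeas) hGdiff
    have e1' : ∀ᵐ x ∂μ, μ (Prod.mk x ⁻¹' (Fk' 0 \ D')) ≠ ⊤ :=
      slice_fin ((hFk'meas 0).diff hD'meas) hFk'0diff
    have e2' : ∀ᵐ x ∂μ, μ (Prod.mk x ⁻¹' (G' \ D')) = 0 :=
      slice_null (hG'meas.diff hD'meas) hG'diff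
    have e3 : ∀ᵐ x ∂μ, μ (Prod.mk x ⁻¹' (D' \ D)) = 0 := slice_null (hD'meas.diff hDmeas) hDD'1
    have e4 : ∀ᵐ x ∂μ, μ (Prod.mk x ⁻¹' (D \ D')) = 0 := slice_null (hDmeas.diff hD'meas) hDD'2
    -- fiberwise analysis
    have hfiber : ∀ᵐ x ∂μ,
        P (Prod.mk x ⁻¹' S) = ENNReal.ofReal (Real.exp (-(μ (Prod.mk x ⁻¹' D)).toReal)) ∧
        P (Prod.mk x ⁻¹' S \ Prod.mk x ⁻¹' S2) = 0 ∧
        P (Prod.mk x ⁻¹' S2 \ Prod.mk x ⁻¹' S) = 0 := by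
      filter_upwards [e1, e2, e1', e2', e3, e4] with x h1 h2 h1' h2' h3 h4
      set Dx : Set X := Prod.mk x ⁻¹' D with hDx
      set Dx' : Set X := Prod.mk x ⁻¹' D' with hDx'
      set Gx : Set X := Prod.mk x ⁻¹' G with hGx
      set Gx' : Set X := Prod.mk x ⁻¹' G' with hGx'
      set Cx : ℕ → Set X := fun k => Prod.mk x ⁻¹' Fk k with hCx
      set Cx' : ℕ → Set X := fun k => Prod.mk x ⁻¹' Fk' k with hCx'
      have hCxmeas : ∀ k, MeasurableSet (Cx k) :=
        fun k => (hFkmeas k).preimage measurable_prodMk_left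
      have hCx'meas : ∀ k, MeasurableSet (Cx' k) :=
        fun k => (hFk'meas k).preimage measurable_prodMk_left
      have hCxanti : Antitone Cx := fun m n hmn => Set.preimage_mono (hFkanti hmn)
      have hCx'anti : Antitone Cx' := fun m n hmn => Set.preimage_mono (hFk'anti hmn)
      have hDxmeas : MeasurableSet Dx := hDmeas.preimage measurable_prodMk_left
      have hGxmeas : MeasurableSet Gx := hGmeas.preimage measurable_prodMk_left
      have hGx'meas : MeasurableSet Gx' := hG'meas.preimage measurable_prodMk_left
      have hDxGx : Dx ⊆ Gx := Set.preimage_mono hDG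
      have hDx'Gx' : Dx' ⊆ Gx' := Set.preimage_mono hD'G'
      have hDx'fin : μ Dx' ≠ ⊤ := by
        have : Dx' = T ⁻¹' (Prod.mk (T x) ⁻¹' D) := rfl
        rw [this, hT.measure_preimage
          ((hDmeas.preimage measurable_prodMk_left).nullMeasurableSet)]
        exact hDxfin (T x)
      have hCx0fin : μ (Cx 0) ≠ ⊤ := by
        have hsub : Cx 0 ⊆ Dx ∪ Prod.mk x ⁻¹' (Fk 0 \ D) := by
          intro y hy
          by_cases hyD : y ∈ Dx
          · exact Or.inl hyD
          · exact Or.inr ⟨hy, hyD⟩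
        exact ne_top_of_le_ne_top (ENNReal.add_ne_top.2 ⟨hDxfin x, h1⟩)
          ((measure_mono hsub).trans (measure_union_le _ _))
      have hCx'0fin : μ (Cx' 0) ≠ ⊤ := by
        have hsub : Cx' 0 ⊆ Dx' ∪ Prod.mk x ⁻¹' (Fk' 0 \ D') := by
          intro y hy
          by_cases hyD : y ∈ Dx'
          · exact Or.inl hyD
          · exact Or.inr ⟨hy, hyD⟩
        exact ne_top_of_le_ne_top (ENNReal.add_ne_top.2 ⟨hDx'fin, h1'⟩)
          ((measure_mono hsub).trans (measure_union_le _ _))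
      have hGxfin : μ Gx ≠ ⊤ := by
        have hsub : Gx ⊆ Dx ∪ Prod.mk x ⁻¹' (G \ D) := by
          intro y hy
          by_cases hyD : y ∈ Dx
          · exact Or.inl hyD
          · exact Or.inr ⟨hy, hyD⟩
        exact ne_top_of_le_ne_top (ENNReal.add_ne_top.2 ⟨hDxfin x, by rw [h2]; exact ENNReal.zero_ne_top⟩)
          ((measure_mono hsub).trans (measure_union_le _ _))
      have hGxDx : μ Gx = μ Dx := by
        refine le_antisymm ?_ (measure_mono hDxGx)
        calc μ Gx ≤ μ (Dx ∪ Prod.mk x ⁻¹' (G \ D)) := by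
              refine measure_mono ?_
              intro y hy
              by_cases hyD : y ∈ Dx
              · exact Or.inl hyD
              · exact Or.inr ⟨hy, hyD⟩
          _ ≤ μ Dx + μ (Prod.mk x ⁻¹' (G \ D)) := measure_union_le _ _
          _ = μ Dx := by rw [h2, add_zero]
      have hGxiInter : Gx = ⋂ k, Cx k := by
        rw [hGx, hGdef, Set.preimage_iInter]
      have hGx'iInter : Gx' = ⋂ k, Cx' k := by
        rw [hGx', hG'iInter, Set.preimage_iInter]
      have hSslice : Prod.mk x ⁻¹' S = ⋃ k, {ω : Set X | ω ∩ Cx k = ∅} := by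
        rw [hSdef, Set.preimage_iUnion]
        rfl
      have hS2slice : Prod.mk x ⁻¹' S2 = ⋃ k, {ω : Set X | ω ∩ Cx' k = ∅} := by
        rw [hS2eq, Set.preimage_iUnion]
        rfl
      have hAe1 : Prod.mk x ⁻¹' S =ᵐ[P] {ω : Set X | ω ∩ Gx = ∅} := by
        rw [hSslice, hGxiInter]
        exact ae_union_empty_iff hP hCxmeas hCxanti hCx0fin
      have hAe1' : Prod.mk x ⁻¹' S2 =ᵐ[P] {ω : Set X | ω ∩ Gx' = ∅} := by
        rw [hS2slice, hGx'iInter]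
        exact ae_union_empty_iff hP hCx'meas hCx'anti hCx'0fin
      -- Gx and Gx' agree up to a null set
      have hsymm_null : μ ((Gx \ Gx') ∪ (Gx' \ Gx)) = 0 := by
        have ha : Gx \ Gx' ⊆ (Prod.mk x ⁻¹' (D \ D')) ∪ (Prod.mk x ⁻¹' (G \ D)) := by
          rintro y ⟨hy1, hy2⟩
          by_cases hyD : y ∈ Dx
          · exact Or.inl ⟨hyD, fun hyD' => hy2 (hDx'Gx' hyD')⟩
          · exact Or.inr ⟨hy1, hyD⟩
        have hb : Gx' \ Gx ⊆ (Prod.mk x ⁻¹' (D' \ D)) ∪ (Prod.mk x ⁻¹' (G' \ D')) := by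
          rintro y ⟨hy1, hy2⟩
          by_cases hyD : y ∈ Dx'
          · exact Or.inl ⟨hyD, fun hyD2 => hy2 (hDxGx hyD2)⟩
          · exact Or.inr ⟨hy1, hyD⟩
        exact measure_union_null
          (measure_mono_null ha (measure_union_null h4 h2))
          (measure_mono_null hb (measure_union_null h3 h2'))
      have hAe2 : {ω : Set X | ω ∩ Gx = ∅} =ᵐ[P] {ω : Set X | ω ∩ Gx' = ∅} := by
        have hNmeas : MeasurableSet ((Gx \ Gx') ∪ (Gx' \ Gx)) :=
          (hGxmeas.diff hGx'meas).union (hGx'meas.diff hGxmeas)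
        have hmiss : ∀ᵐ ω ∂P, ¬(ω ∩ ((Gx \ Gx') ∪ (Gx' \ Gx))).Nonempty := by
          have h0 := P_null_inter hP hNmeas hsymm_null
          rw [← compl_compl {ω : Set X | (ω ∩ ((Gx \ Gx') ∪ (Gx' \ Gx))).Nonempty}] at h0
          exact (MeasureTheory.ae_iff).2 (by simpa using h0)
        rw [Filter.eventuallyEq_set]
        filter_upwards [hmiss] with ω hω
        rw [Set.not_nonempty_iff_eq_empty, Set.eq_empty_iff_forall_notMem] at hω
        constructor
        · intro hempty
          rw [Set.eq_empty_iff_forall_notMem] at hempty ⊢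
          rintro y ⟨hyω, hyG'⟩
          by_cases hyG : y ∈ Gx
          · exact hempty y ⟨hyω, hyG⟩
          · exact hω y ⟨hyω, Or.inr ⟨hyG', hyG⟩⟩
        · intro hempty
          rw [Set.eq_empty_iff_forall_notMem] at hempty ⊢
          rintro y ⟨hyω, hyG⟩
          by_cases hyG' : y ∈ Gx'
          · exact hempty y ⟨hyω, hyG'⟩
          · exact hω y ⟨hyω, Or.inl ⟨hyG, hyG'⟩⟩
      have hPGx : P {ω : Set X | ω ∩ Gx = ∅}
          = ENNReal.ofReal (Real.exp (-(μ Dx).toReal)) := by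
        rw [P_empty_inter hP hGxmeas hGxfin, hGxDx]
      have hchain : Prod.mk x ⁻¹' S =ᵐ[P] Prod.mk x ⁻¹' S2 :=
        hAe1.trans (hAe2.trans hAe1'.symm)
      refine ⟨?_, (ae_eq_set.1 hchain).1, (ae_eq_set.1 hchain).2⟩
      calc P (Prod.mk x ⁻¹' S) = P {ω : Set X | ω ∩ Gx = ∅} := measure_congr hAe1
        _ = ENNReal.ofReal (Real.exp (-(μ Dx).toReal)) := hPGx
    -- S is almost invariant
    have hinv : Prod.map T (Set.image T) ⁻¹' S =ᵐ[μ.prod P] S := by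
      refine ae_eq_set.2 ⟨?_, ?_⟩
      · have hm : MeasurableSet (S2 \ S) := hS2meas.diff hSmeas
        show μ.prod P (S2 \ S) = 0
        rw [Measure.prod_apply hm]
        have hz : (fun x => P (Prod.mk x ⁻¹' (S2 \ S))) =ᵐ[μ] 0 := by
          filter_upwards [hfiber] with x hx
          have : Prod.mk x ⁻¹' (S2 \ S) = Prod.mk x ⁻¹' S2 \ Prod.mk x ⁻¹' S := rfl
          rw [this]
          exact hx.2.2
        rw [lintegral_congr_ae hz]
        simp
      · have hm : MeasurableSet (S \ S2) := hSmeas.diff hS2meas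
        show μ.prod P (S \ S2) = 0
        rw [Measure.prod_apply hm]
        have hz : (fun x => P (Prod.mk x ⁻¹' (S \ S2))) =ᵐ[μ] 0 := by
          filter_upwards [hfiber] with x hx
          have : Prod.mk x ⁻¹' (S \ S2) = Prod.mk x ⁻¹' S \ Prod.mk x ⁻¹' S2 := rfl
          rw [this]
          exact hx.2.1
        rw [lintegral_congr_ae hz]
        simp
    rcases hprod.quasiErgodic.ae_empty_or_univ₀ hSmeas.nullMeasurableSet hinv with hcase | hcase
    · exfalso
      have hS0 : μ.prod P S = 0 := ae_eq_empty.1 hcase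
      rw [Measure.prod_apply hSmeas] at hS0
      have hzero : ∀ᵐ x ∂μ, P (Prod.mk x ⁻¹' S) = 0 :=
        (lintegral_eq_zero_iff (measurable_measure_prodMk_left hSmeas)).1 hS0
      have hfalse : ∀ᵐ _x ∂μ, False := by
        filter_upwards [hzero, hfiber] with x hx hfx
        rw [hfx.1] at hx
        exact absurd hx (ne_of_gt (ENNReal.ofReal_pos.2 (Real.exp_pos _)))
      have : μ Set.univ = 0 := by simpa [MeasureTheory.ae_iff] using hfalse
      rw [hinf] at this
      exact ENNReal.top_ne_zero this
    · have hSc0 : μ.prod P Sᶜ = 0 := ae_eq_univ.1 hcase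
      rw [Measure.prod_apply hSmeas.compl] at hSc0
      have hone : ∀ᵐ x ∂μ, P (Prod.mk x ⁻¹' Sᶜ) = 0 :=
        (lintegral_eq_zero_iff (measurable_measure_prodMk_left hSmeas.compl)).1 hSc0
      filter_upwards [hone, hfiber] with x hx hfx
      have hmeasx : MeasurableSet (Prod.mk x ⁻¹' S) := hSmeas.preimage measurable_prodMk_left
      have h1 : P (Prod.mk x ⁻¹' S) = 1 := by
        rw [← prob_compl_eq_zero_iff hmeasx]
        simpa [Set.preimage_compl] using hx
      rw [hfx.1] at h1
      have h2 : (1 : ℝ) ≤ Real.exp (-(μ (Prod.mk x ⁻¹' D)).toReal) :=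
        ENNReal.one_le_ofReal.1 h1.ge
      have h3 : (μ (Prod.mk x ⁻¹' D)).toReal ≤ 0 := by
        have := Real.exp_le_exp.1 (by rwa [Real.exp_zero] : Real.exp 0 ≤ Real.exp (-(μ (Prod.mk x ⁻¹' D)).toReal))
        linarith
      have h4 : (μ (Prod.mk x ⁻¹' D)).toReal = 0 := le_antisymm h3 ENNReal.toReal_nonneg
      have h5 : μ (Prod.mk x ⁻¹' D) = 0 := by
        rcases (ENNReal.toReal_eq_zero_iff _).1 h4 with h | h
        · exact h
        · exact absurd h (hDxfin x)
      rw [← hDslice x]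
      exact h5
  have h2 : ∀ᵐ x ∂μ, ∀ n : ℕ, μ {y : X | 1 / (n + 1 : ℝ) < |Φ x y|} = 0 :=
    ae_all_iff.2 fun n => key _ (by positivity)
  filter_upwards [h2] with x hx
  have hzero : μ {y : X | Φ x y ≠ 0} = 0 := by
    have hsub : {y : X | Φ x y ≠ 0} ⊆ ⋃ n : ℕ, {y : X | 1 / (n + 1 : ℝ) < |Φ x y|} := by
      intro y hy
      obtain ⟨n, hn⟩ := exists_nat_one_div_lt (abs_pos.2 hy)
      exact Set.mem_iUnion.2 ⟨n, hn⟩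
    exact measure_mono_null hsub (measure_iUnion_null fun n => hx n)
  refine (MeasureTheory.ae_iff).2 ?_
  simpa using hzero

end
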